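/- Let (X,Y) be a pair of nonnegative random variables on a probability space with joint survival function H̄(x,y)=P(X>x, Y>y), and let r, s > 0 be real numbers such that E[X^r·Y^s], E[X^r] and E[Y^s] are finite. Then E[X^r·Y^s] = r·s·∫₀^∞∫₀^∞ H̄(x,y)·x^{r−1}·y^{s−1} dx dy. -/

import Mathlib

open MeasureTheory Real Set
open scoped ENNReal

/-- Joint survival function `(x,y) ↦ P(X > x, Y > y)`. -/
def jointSurvival {Ω : Type*} [MeasurableSpace Ω] (μ : Measure Ω) (X Y : Ω → ℝ) (x y : ℝ) : ℝ :=
  (μ {ω | x < X ω ∧ y < Y ω}).toReal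

lemma aux_rpow (r : ℝ) (hr : 0 < r) (a : ℝ) :
    ∫⁻ x in Ioi (0:ℝ), (Iio a).indicator (fun x => ENNReal.ofReal (r * x ^ (r-1))) x
      = ENNReal.ofReal ((max a 0) ^ r) := by
  rw [lintegral_indicator measurableSet_Iio, Measure.restrict_restrict measurableSet_Iio]
  have hset : Iio a ∩ Ioi 0 = Ioo 0 a := by ext x; simp [and_comm]
  rw [hset]
  rcases le_or_gt a 0 with ha | ha
  · rw [Ioo_eq_empty (by simpa using ha)]
    simp [max_eq_right ha, Real.zero_rpow hr.ne']
  · rw [max_eq_left ha.le]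
    have hint : IntegrableOn (fun x => r * x ^ (r-1)) (Ioo 0 a) := by
      have h1 := (intervalIntegral.intervalIntegrable_rpow' (a := 0) (b := a)
        (r := r - 1) (by linarith)).const_mul r
      exact (intervalIntegrable_iff_integrableOn_Ioo_of_le ha.le).mp h1
    rw [← ofReal_integral_eq_lintegral_ofReal hint ?nn]
    · congr 1
      rw [integral_const_mul]
      have h2 : ∫ x in Ioo (0:ℝ) a, x ^ (r-1) = ∫ x in (0:ℝ)..a, x ^ (r-1) := by
        rw [intervalIntegral.integral_of_le ha.le, integral_Ioc_eq_integral_Ioo]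
      rw [h2, integral_rpow (Or.inl (by linarith))]
      have : r - 1 + 1 = r := by ring
      rw [this, Real.zero_rpow hr.ne']
      field_simp
      ring
    case nn =>
      filter_upwards [ae_restrict_mem measurableSet_Ioo] with x hx
      have := Real.rpow_nonneg hx.1.le (r-1)
      positivity

theorem product_moment_via_survival {Ω : Type*} [MeasurableSpace Ω] (μ : Measure Ω)
    [IsProbabilityMeasure μ] (X Y : Ω → ℝ) (hX : Measurable X) (hY : Measurable Y)
    (hXnn : μ {ω | 0 ≤ X ω} = 1) (hYnn : μ {ω | 0 ≤ Y ω} = 1)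
    (r s : ℝ) (hr : 0 < r) (hs : 0 < s)
    (hXY : Integrable (fun ω => X ω ^ r * Y ω ^ s) μ)
    (hXr : Integrable (fun ω => X ω ^ r) μ)
    (hYs : Integrable (fun ω => Y ω ^ s) μ) :
    ∫ ω, X ω ^ r * Y ω ^ s ∂μ =
      r * s * ∫ x in Ioi (0:ℝ), ∫ y in Ioi (0:ℝ),
        jointSurvival μ X Y x y * x ^ (r - 1) * y ^ (s - 1) := by
  -- notation
  set ν : Measure ℝ := volume.restrict (Ioi 0) with hν
  -- a.e. nonnegativity
  have hXae : ∀ᵐ ω ∂μ, 0 ≤ X ω := by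
    rw [ae_iff]
    have hms : MeasurableSet {ω | 0 ≤ X ω} := measurableSet_le measurable_const hX
    have h := measure_compl hms (measure_ne_top μ _)
    rw [hXnn, measure_univ, tsub_self] at h
    simpa [Set.compl_setOf] using h
  have hYae : ∀ᵐ ω ∂μ, 0 ≤ Y ω := by
    rw [ae_iff]
    have hms : MeasurableSet {ω | 0 ≤ Y ω} := measurableSet_le measurable_const hY
    have h := measure_compl hms (measure_ne_top μ _)
    rw [hYnn, measure_univ, tsub_self] at h
    simpa [Set.compl_setOf] using h
  -- measurability helpers
  have hcx : Measurable fun x : ℝ => ENNReal.ofReal (r * x ^ (r-1)) := by fun_prop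
  have hcy : Measurable fun y : ℝ => ENNReal.ofReal (s * y ^ (s-1)) := by fun_prop
  have hmm : Measurable (fun p : ℝ × ℝ => μ {ω | p.1 < X ω ∧ p.2 < Y ω}) := by
    have hsS : MeasurableSet {q : (ℝ × ℝ) × Ω | q.1.1 < X q.2 ∧ q.1.2 < Y q.2} :=
      (measurableSet_lt (measurable_fst.comp measurable_fst) (hX.comp measurable_snd)).inter
        (measurableSet_lt (measurable_snd.comp measurable_fst) (hY.comp measurable_snd))
    exact measurable_measure_prodMk_left (ν := μ) hsS
  -- the key indicator function on Ω × (ℝ × ℝ)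
  set Φ : Ω × ℝ × ℝ → ℝ≥0∞ :=
    Set.indicator {z : Ω × ℝ × ℝ | z.2.1 < X z.1 ∧ z.2.2 < Y z.1}
      (fun z => ENNReal.ofReal (r * z.2.1 ^ (r-1)) * ENNReal.ofReal (s * z.2.2 ^ (s-1)))
      with hΦ
  have hΦmeas : Measurable Φ := by
    apply Measurable.indicator
    · exact (hcx.comp (measurable_fst.comp measurable_snd)).mul
        (hcy.comp (measurable_snd.comp measurable_snd))
    · exact (measurableSet_lt (measurable_fst.comp measurable_snd)
        (hX.comp measurable_fst)).inter
        (measurableSet_lt (measurable_snd.comp measurable_snd) (hY.comp measurable_fst))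
  -- key pointwise identity
  have key1 : ∀ ω, 0 ≤ X ω → 0 ≤ Y ω →
      ENNReal.ofReal (X ω ^ r * Y ω ^ s) = ∫⁻ p, Φ (ω, p) ∂(ν.prod ν) := by
    intro ω hx hy
    have h1 : ∀ p : ℝ × ℝ, Φ (ω, p) =
        ((Iio (X ω)).indicator (fun x => ENNReal.ofReal (r * x ^ (r-1))) p.1) *
        ((Iio (Y ω)).indicator (fun y => ENNReal.ofReal (s * y ^ (s-1))) p.2) := by
      intro p
      simp only [hΦ, Set.indicator_apply, Set.mem_setOf_eq, Set.mem_Iio]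
      by_cases h1 : p.1 < X ω <;> by_cases h2 : p.2 < Y ω <;> simp [h1, h2]
    calc ENNReal.ofReal (X ω ^ r * Y ω ^ s)
        = ENNReal.ofReal (X ω ^ r) * ENNReal.ofReal (Y ω ^ s) :=
          ENNReal.ofReal_mul (Real.rpow_nonneg hx r)
      _ = (∫⁻ x in Ioi (0:ℝ), (Iio (X ω)).indicator
            (fun x => ENNReal.ofReal (r * x ^ (r-1))) x) *
          (∫⁻ y in Ioi (0:ℝ), (Iio (Y ω)).indicator
            (fun y => ENNReal.ofReal (s * y ^ (s-1))) y) := by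
          rw [aux_rpow r hr (X ω), aux_rpow s hs (Y ω), max_eq_left hx, max_eq_left hy]
      _ = ∫⁻ p : ℝ × ℝ, ((Iio (X ω)).indicator
            (fun x => ENNReal.ofReal (r * x ^ (r-1))) p.1) *
          ((Iio (Y ω)).indicator (fun y => ENNReal.ofReal (s * y ^ (s-1))) p.2)
            ∂(ν.prod ν) := by
          rw [lintegral_prod_mul]
          · exact ((hcx.indicator measurableSet_Iio).aemeasurable)
          · exact ((hcy.indicator measurableSet_Iio).aemeasurable)
      _ = ∫⁻ p, Φ (ω, p) ∂(ν.prod ν) := lintegral_congr fun p => (h1 p).symm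
  -- collapse the inner ω-integral
  have inner1 : ∀ p : ℝ × ℝ, ∫⁻ ω, Φ (ω, p) ∂μ =
      ENNReal.ofReal (r * p.1 ^ (r-1)) * ENNReal.ofReal (s * p.2 ^ (s-1)) *
        μ {ω | p.1 < X ω ∧ p.2 < Y ω} := by
    intro p
    have h1 : ∀ ω, Φ (ω, p) = Set.indicator {ω | p.1 < X ω ∧ p.2 < Y ω}
        (fun _ => ENNReal.ofReal (r * p.1 ^ (r-1)) * ENNReal.ofReal (s * p.2 ^ (s-1))) ω := by
      intro ω
      simp only [hΦ, Set.indicator_apply, Set.mem_setOf_eq]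
    have hms : MeasurableSet {ω | p.1 < X ω ∧ p.2 < Y ω} :=
      (measurableSet_lt measurable_const hX).inter (measurableSet_lt measurable_const hY)
    rw [lintegral_congr h1, lintegral_indicator_const hms]
  -- the main lintegral identity
  have hE : ∫⁻ ω, ENNReal.ofReal (X ω ^ r * Y ω ^ s) ∂μ =
      ∫⁻ x in Ioi (0:ℝ), ∫⁻ y in Ioi (0:ℝ),
        ENNReal.ofReal (r * x ^ (r-1)) * ENNReal.ofReal (s * y ^ (s-1)) *
          μ {ω | x < X ω ∧ y < Y ω} := by
    have step1 : ∫⁻ ω, ENNReal.ofReal (X ω ^ r * Y ω ^ s) ∂μ =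
        ∫⁻ ω, ∫⁻ p, Φ (ω, p) ∂(ν.prod ν) ∂μ := by
      apply lintegral_congr_ae
      filter_upwards [hXae, hYae] with ω hx hy using key1 ω hx hy
    rw [step1, lintegral_lintegral_swap (f := fun ω p => Φ (ω, p)) (by exact hΦmeas.aemeasurable),
      lintegral_congr inner1, lintegral_prod]
    exact ((hcx.comp measurable_fst).mul (hcy.comp measurable_snd)).mul hmm |>.aemeasurable
  -- name L
  set L : ℝ≥0∞ := ∫⁻ x in Ioi (0:ℝ), ∫⁻ y in Ioi (0:ℝ),
      ENNReal.ofReal (x ^ (r-1)) * ENNReal.ofReal (y ^ (s-1)) *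
        μ {ω | x < X ω ∧ y < Y ω} with hL
  have hE2 : ∫⁻ ω, ENNReal.ofReal (X ω ^ r * Y ω ^ s) ∂μ =
      ENNReal.ofReal r * ENNReal.ofReal s * L := by
    rw [hE, hL]
    have step : ∀ x : ℝ, ∫⁻ y in Ioi (0:ℝ),
        ENNReal.ofReal (r * x ^ (r-1)) * ENNReal.ofReal (s * y ^ (s-1)) *
          μ {ω | x < X ω ∧ y < Y ω}
        = ENNReal.ofReal r * ENNReal.ofReal s *
          ∫⁻ y in Ioi (0:ℝ), ENNReal.ofReal (x ^ (r-1)) * ENNReal.ofReal (y ^ (s-1)) *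
            μ {ω | x < X ω ∧ y < Y ω} := by
      intro x
      rw [← lintegral_const_mul' _ _ (by finiteness)]
      apply lintegral_congr
      intro y
      rw [ENNReal.ofReal_mul hr.le, ENNReal.ofReal_mul hs.le]
      ring
    calc ∫⁻ x in Ioi (0:ℝ), ∫⁻ y in Ioi (0:ℝ),
          ENNReal.ofReal (r * x ^ (r-1)) * ENNReal.ofReal (s * y ^ (s-1)) *
            μ {ω | x < X ω ∧ y < Y ω}
        = ∫⁻ x in Ioi (0:ℝ), ENNReal.ofReal r * ENNReal.ofReal s *
            ∫⁻ y in Ioi (0:ℝ), ENNReal.ofReal (x ^ (r-1)) * ENNReal.ofReal (y ^ (s-1)) *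
              μ {ω | x < X ω ∧ y < Y ω} := lintegral_congr step
      _ = _ := lintegral_const_mul' _ _ (by finiteness)
  -- finiteness
  have hEfin : ∫⁻ ω, ENNReal.ofReal (X ω ^ r * Y ω ^ s) ∂μ ≠ ⊤ := hXY.lintegral_lt_top.ne
  have hLfin : L ≠ ⊤ := by
    intro h
    rw [hE2, h, ENNReal.mul_top] at hEfin
    · exact hEfin rfl
    · exact mul_ne_zero (ENNReal.ofReal_pos.mpr hr).ne' (ENNReal.ofReal_pos.mpr hs).ne'
  -- the inner function J
  set J : ℝ → ℝ≥0∞ := fun x => ∫⁻ y in Ioi (0:ℝ),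
      ENNReal.ofReal (x ^ (r-1)) * ENNReal.ofReal (y ^ (s-1)) *
        μ {ω | x < X ω ∧ y < Y ω} with hJ
  have hJmeas : Measurable J := by
    apply Measurable.lintegral_prod_right (f := fun x y =>
      ENNReal.ofReal (x ^ (r-1)) * ENNReal.ofReal (y ^ (s-1)) * μ {ω | x < X ω ∧ y < Y ω})
    exact (((by fun_prop : Measurable fun p : ℝ × ℝ => ENNReal.ofReal (p.1 ^ (r-1))).mul
      (by fun_prop : Measurable fun p : ℝ × ℝ => ENNReal.ofReal (p.2 ^ (s-1)))).mul hmm)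
  have hJfin : ∀ᵐ x ∂ν, J x < ⊤ := ae_lt_top hJmeas (by rw [← hν] at hL; exact hL ▸ hLfin)
  -- inner real integral
  have hR1 : ∀ x ∈ Ioi (0:ℝ),
      (∫ y in Ioi (0:ℝ), jointSurvival μ X Y x y * x ^ (r - 1) * y ^ (s - 1)) =
        (J x).toReal := by
    intro x hx
    have hxpos : (0:ℝ) < x := hx
    have hmx : Measurable fun y : ℝ => μ {ω | x < X ω ∧ y < Y ω} :=
      hmm.comp (by fun_prop : Measurable fun y : ℝ => (x, y))
    rw [integral_eq_lintegral_of_nonneg_ae]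
    · congr 1
      rw [hJ]
      apply lintegral_congr_ae
      filter_upwards [ae_restrict_mem measurableSet_Ioi] with y hy
      unfold jointSurvival
      rw [ENNReal.ofReal_mul (mul_nonneg ENNReal.toReal_nonneg (Real.rpow_nonneg hxpos.le _)),
        ENNReal.ofReal_mul ENNReal.toReal_nonneg,
        ENNReal.ofReal_toReal (measure_ne_top μ _)]
      ring
    · filter_upwards [ae_restrict_mem measurableSet_Ioi] with y hy
      have h1 : (0:ℝ) ≤ jointSurvival μ X Y x y := ENNReal.toReal_nonneg
      have h2 := Real.rpow_nonneg hxpos.le (r-1)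
      have h3 := Real.rpow_nonneg (le_of_lt (mem_Ioi.mp hy)) (s-1)
      positivity
    · apply Measurable.aestronglyMeasurable
      apply Measurable.mul
      apply Measurable.mul
      · exact hmx.ennreal_toReal
      · exact measurable_const
      · fun_prop
  -- conclude
  have hRHS : (∫ x in Ioi (0:ℝ), ∫ y in Ioi (0:ℝ),
      jointSurvival μ X Y x y * x ^ (r - 1) * y ^ (s - 1)) = L.toReal := by
    rw [setIntegral_congr_fun measurableSet_Ioi hR1]
    rw [← hν] at hL ⊢
    rw [hL]
    exact integral_toReal hJmeas.aemeasurable hJfin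
  have hLHS : ∫ ω, X ω ^ r * Y ω ^ s ∂μ =
      (∫⁻ ω, ENNReal.ofReal (X ω ^ r * Y ω ^ s) ∂μ).toReal := by
    apply integral_eq_lintegral_of_nonneg_ae
    · filter_upwards [hXae, hYae] with ω hx hy
      exact mul_nonneg (Real.rpow_nonneg hx r) (Real.rpow_nonneg hy s)
    · exact hXY.1
  rw [hLHS, hE2, hRHS, ENNReal.toReal_mul, ENNReal.toReal_mul,
    ENNReal.toReal_ofReal hr.le, ENNReal.toReal_ofReal hs.le]
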